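/- Let k ≥ 2 and r ≥ 2 be integers, let H be a k-uniform hypergraph, let v_1, …, v_r be r new vertices not in V(H), and let G' be the hypergraph with vertex set {v_1,…,v_r} ∪ V(H) and edge set {e ∪ {v_i} : e ∈ E(H), i ∈ {1,…,r}}. Then G' is (k+1)-uniform, ν(G') ≤ r, and the partial r-coloring ({v_1,…,v_r}, c') with c'(v_i) = i for all i ∈ {1,…,r} r-extends to G' if and only if H is r-colorable. -/
import Mathlib


open Finset

/-- `(V, E)` is a hypergraph: every edge is a nonempty subset of `V`. -/
def IsHypergraph {α : Type*} (V : Finset α) (E : Finset (Finset α)) : Prop :=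
  ∀ e ∈ E, e ⊆ V ∧ e.Nonempty

/-- A matching: a set of pairwise disjoint edges. -/
def IsMatching {α : Type*} (M : Finset (Finset α)) : Prop :=
  ∀ e ∈ M, ∀ f ∈ M, e ≠ f → Disjoint e f

/-- `ν(G) ≤ s`: every matching consisting of edges of `E` has at most `s` edges. -/
def MatchNumLE {α : Type*} (E : Finset (Finset α)) (s : ℕ) : Prop :=
  ∀ M ⊆ E, IsMatching M → M.card ≤ s

/-- An edge `e` is monochromatic under the coloring `c`. -/
def Mono {α : Type*} (e : Finset α) {r : ℕ} (c : α → Fin r) : Prop :=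
  ∃ i, ∀ v ∈ e, c v = i

/-- `c` is a proper coloring of the hypergraph with edge set `E`:
no edge is monochromatic. -/
def IsColoring {α : Type*} (E : Finset (Finset α)) {r : ℕ} (c : α → Fin r) : Prop :=
  ∀ e ∈ E, ¬ Mono e c

/-- The hypergraph with edge set `E` is `r`-colorable. -/
def HColorable {α : Type*} (E : Finset (Finset α)) (r : ℕ) : Prop :=
  ∃ c : α → Fin r, IsColoring E c

/-- Let `H` be a `k`-uniform hypergraph, `v 0, …, v (r-1)` be `r` new distinct
vertices not in `V(H)`, and `G'` the hypergraph with vertex set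
`{v 0, …, v (r-1)} ∪ V(H)` and edge set `{e ∪ {v i} : e ∈ E(H), i}`. Then `G'`
is `(k+1)`-uniform, `ν(G') ≤ r`, and the precoloring assigning color `i` to
`v i` `r`-extends to `G'` iff `H` is `r`-colorable. -/
theorem precoloring_gadget {α : Type*} [DecidableEq α] (k r : ℕ)
    (hk : 2 ≤ k) (hr : 2 ≤ r)
    (VH : Finset α) (EH : Finset (Finset α))
    (hH : IsHypergraph VH EH) (hunif : ∀ e ∈ EH, e.card = k)
    (v : Fin r → α) (hv : Function.Injective v) (hvVH : ∀ i, v i ∉ VH) :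
    (∀ e ∈ EH.biUnion (fun e => (Finset.univ : Finset (Fin r)).image
        (fun i => insert (v i) e)), e.card = k + 1) ∧
    MatchNumLE (EH.biUnion (fun e => (Finset.univ : Finset (Fin r)).image
        (fun i => insert (v i) e))) r ∧
    ((∃ c : α → Fin r,
        IsColoring (EH.biUnion (fun e => (Finset.univ : Finset (Fin r)).image
          (fun i => insert (v i) e))) c ∧ ∀ i, c (v i) = i) ↔
      HColorable EH r) := by
  have hr0 : 0 < r := by omega
  have hmem : ∀ f, f ∈ EH.biUnion (fun e => (Finset.univ : Finset (Fin r)).image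
      (fun i => insert (v i) e)) ↔ ∃ e ∈ EH, ∃ i : Fin r, f = insert (v i) e := by
    intro f
    simp only [Finset.mem_biUnion, Finset.mem_image, Finset.mem_univ, true_and]
    constructor
    · rintro ⟨e, he, i, hi⟩; exact ⟨e, he, i, hi.symm⟩
    · rintro ⟨e, he, i, hi⟩; exact ⟨e, he, i, hi.symm⟩
  have hnotin : ∀ (i : Fin r) e, e ∈ EH → v i ∉ e := fun i e he h =>
    hvVH i ((hH e he).1 h)
  refine ⟨?_, ?_, ?_⟩
  · intro f hf
    obtain ⟨e, he, i, rfl⟩ := (hmem f).1 hf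
    rw [Finset.card_insert_of_notMem (hnotin i e he), hunif e he]
  · intro M hM hmatch
    classical
    have key : ∀ f ∈ M, ∃ i : Fin r, v i ∈ f := by
      intro f hf
      obtain ⟨e, he, i, rfl⟩ := (hmem f).1 (hM hf)
      exact ⟨i, Finset.mem_insert_self _ _⟩
    set g : Finset α → Fin r := fun f =>
      if h : ∃ i : Fin r, v i ∈ f then h.choose else ⟨0, hr0⟩ with hg
    have hgmem : ∀ f ∈ M, v (g f) ∈ f := by
      intro f hf
      rw [hg]; simp only [dif_pos (key f hf)]
      exact (key f hf).choose_spec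
    have : Set.InjOn g M := by
      intro f1 h1 f2 h2 hgf
      by_contra hne
      have hd := hmatch f1 h1 f2 h2 hne
      exact (Finset.disjoint_left.1 hd (hgmem f1 h1)) (hgf ▸ hgmem f2 h2)
    calc M.card ≤ (Finset.univ : Finset (Fin r)).card :=
          Finset.card_le_card_of_injOn g (fun _ _ => Finset.mem_univ _) this
      _ = r := by simp
  · constructor
    · rintro ⟨c, hc, hcv⟩
      refine ⟨c, fun e he hmono => ?_⟩
      obtain ⟨i, hi⟩ := hmono
      refine hc (insert (v i) e) ((hmem _).2 ⟨e, he, i, rfl⟩) ⟨i, ?_⟩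
      intro w hw
      rcases Finset.mem_insert.1 hw with rfl | hw
      · exact hcv i
      · exact hi w hw
    · rintro ⟨c, hc⟩
      classical
      set c' : α → Fin r := fun x =>
        if h : ∃ i : Fin r, v i = x then h.choose else c x with hc'
      have hvc' : ∀ i, c' (v i) = i := by
        intro i
        have h : ∃ j : Fin r, v j = v i := ⟨i, rfl⟩
        rw [hc']; simp only [dif_pos h]
        exact hv h.choose_spec
      have hec' : ∀ e ∈ EH, ∀ w ∈ e, c' w = c w := by
        intro e he w hw
        rw [hc']
        have : ¬ ∃ i : Fin r, v i = w := by
          rintro ⟨i, rfl⟩; exact hnotin i e he hw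
        simp only [dif_neg this]
      refine ⟨c', fun f hf hmono => ?_, hvc'⟩
      obtain ⟨e, he, i, rfl⟩ := (hmem f).1 hf
      obtain ⟨j, hj⟩ := hmono
      refine hc e he ⟨j, fun w hw => ?_⟩
      rw [← hec' e he w hw]
      exact hj w (Finset.mem_insert_of_mem hw)
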